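/- Consider the Broyden good update B₊ = B + (As − Bs)sᵀ/(sᵀs) for nonzero s ∈ ℝⁿ. If ξ ∈ ℝⁿ satisfies (B − A)ξ = 0 and sᵀξ = 0, then (B₊ − A)ξ = 0. Consequently, if at each step a nonzero sₖ is chosen in the Euclidean orthogonal complement of ker(B_k − A) and B_{k+1} is the Broyden good update of B_k with direction s_k, then ker(B_{k+1} − A) strictly contains ker(B_k − A) whenever B_k ≠ A, and hence B_n = A after at most n steps. -/
import Mathlib

open Matrix

lemma vecMulVec_mulVec' {n : ℕ} (u s ξ : Fin n → ℝ) :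
    vecMulVec u s *ᵥ ξ = (s ⬝ᵥ ξ) • u := by
  ext i
  simp [vecMulVec_apply, mulVec, dotProduct, Finset.mul_sum, mul_comm, mul_left_comm,
    Finset.sum_mul, mul_assoc]

/-- Kernel preservation for the Broyden good update, and the resulting quadratic
termination: if each correction direction is chosen nonzero in the Euclidean
orthogonal complement of ker(B_k − A), then the kernels strictly increase while
B_k ≠ A, and B_n = A. -/
theorem stmt_17 (n : ℕ) (A : Matrix (Fin n) (Fin n) ℝ) :
    (∀ (B : Matrix (Fin n) (Fin n) ℝ) (s ξ : Fin n → ℝ), s ≠ 0 →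
      (B - A) *ᵥ ξ = 0 → s ⬝ᵥ ξ = 0 →
      ((B + (s ⬝ᵥ s)⁻¹ • vecMulVec (A *ᵥ s - B *ᵥ s) s) - A) *ᵥ ξ = 0)
    ∧ ∀ (B : ℕ → Matrix (Fin n) (Fin n) ℝ) (s : ℕ → (Fin n → ℝ)),
        (∀ k, s k ≠ 0) →
        (∀ k, ∀ x : Fin n → ℝ, (B k - A) *ᵥ x = 0 → s k ⬝ᵥ x = 0) →
        (∀ k, B (k + 1) = B k + (s k ⬝ᵥ s k)⁻¹ • vecMulVec (A *ᵥ s k - B k *ᵥ s k) (s k)) →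
        (∀ k, B k ≠ A →
          LinearMap.ker (B k - A).mulVecLin < LinearMap.ker (B (k + 1) - A).mulVecLin)
        ∧ B n = A := by
  have key : ∀ (B : Matrix (Fin n) (Fin n) ℝ) (s ξ : Fin n → ℝ), s ≠ 0 →
      (B - A) *ᵥ ξ = 0 → s ⬝ᵥ ξ = 0 →
      ((B + (s ⬝ᵥ s)⁻¹ • vecMulVec (A *ᵥ s - B *ᵥ s) s) - A) *ᵥ ξ = 0 := by
    intro B s ξ _ h1 h2
    have : (B + (s ⬝ᵥ s)⁻¹ • vecMulVec (A *ᵥ s - B *ᵥ s) s) - A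
        = (B - A) + (s ⬝ᵥ s)⁻¹ • vecMulVec (A *ᵥ s - B *ᵥ s) s := add_sub_right_comm _ _ _
    rw [this, add_mulVec, h1, smul_mulVec, vecMulVec_mulVec', h2]
    simp
  refine ⟨key, ?_⟩
  intro B s hs horth hrec
  -- s k ∈ ker (B (k+1) - A)
  have hmem : ∀ k, (B (k+1) - A) *ᵥ s k = 0 := by
    intro k
    rw [hrec k]
    have hne : s k ⬝ᵥ s k ≠ 0 := fun h => hs k (by simpa using h)
    have : (B k + (s k ⬝ᵥ s k)⁻¹ • vecMulVec (A *ᵥ s k - B k *ᵥ s k) (s k)) - A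
        = (B k - A) + (s k ⬝ᵥ s k)⁻¹ • vecMulVec (A *ᵥ s k - B k *ᵥ s k) (s k) := add_sub_right_comm _ _ _
    rw [this, add_mulVec, smul_mulVec, vecMulVec_mulVec', smul_smul,
      inv_mul_cancel₀ hne, one_smul, sub_mulVec]
    abel
  have hlt : ∀ k, B k ≠ A →
      LinearMap.ker (B k - A).mulVecLin < LinearMap.ker (B (k + 1) - A).mulVecLin := by
    intro k hBk
    have hle : LinearMap.ker (B k - A).mulVecLin ≤ LinearMap.ker (B (k+1) - A).mulVecLin := by
      intro x hx
      rw [LinearMap.mem_ker, mulVecLin_apply] at hx ⊢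
      rw [hrec k]
      exact key (B k) (s k) x (hs k) hx (horth k x hx)
    refine lt_of_le_of_ne hle fun heq => ?_
    have hsk : s k ∈ LinearMap.ker (B (k+1) - A).mulVecLin := by
      rw [LinearMap.mem_ker, mulVecLin_apply]; exact hmem k
    rw [← heq, LinearMap.mem_ker, mulVecLin_apply] at hsk
    have := horth k (s k) hsk
    exact hs k (by simpa using this)
  refine ⟨hlt, ?_⟩
  -- once equal, stays equal
  have hstay : ∀ k, B k = A → B (k+1) = A := by
    intro k h
    rw [hrec k, h, sub_self]
    ext i j
    simp [vecMulVec_apply]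
  have hrank : ∀ k, B k = A ∨ k ≤ Module.finrank ℝ (LinearMap.ker (B k - A).mulVecLin) := by
    intro k
    induction k with
    | zero => right; exact Nat.zero_le _
    | succ k ih =>
      rcases ih with h | h
      · left; exact hstay k h
      · by_cases hBk : B k = A
        · left; exact hstay k hBk
        · right
          have := Submodule.finrank_lt_finrank_of_lt (hlt k hBk)
          omega
  rcases hrank n with h | h
  · exact h
  · have htop : LinearMap.ker (B n - A).mulVecLin = ⊤ := by
      apply Submodule.eq_top_of_finrank_eq
      have hle := Submodule.finrank_le (LinearMap.ker (B n - A).mulVecLin)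
      simp only [Module.finrank_fin_fun] at hle ⊢
      omega
    have : (B n - A).mulVecLin = 0 := LinearMap.ker_eq_top.mp htop
    have h0 : B n - A = 0 := by
      apply Matrix.toLin'.injective
      rw [Matrix.toLin'_apply', this]
      simp
    exact sub_eq_zero.mp h0
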